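/- Let θ be irrational with q_n^{-1} log q_{n+1} → ∞, let (q'_n) be a subsequence of the convergent denominators, and u ∈ l^∞. If for some (w_0,z_0) ∈ ℂ² the full orbit of (w_0,z_0) under A(w,z) = (e^{2πiθ}w + φ_{θ}(z), e^{2πiθ}z) is bounded by M, then the family of entire maps φ_{Nθ,u}(z) = z e^{2πiNθ} Σ_n u_{q'_n}(1−e^{2πi q'_n Nθ}) z^{q'_n}, N ≥ 0, is uniformly bounded by 2M on the circle |z| = |z_0|, and hence on the disc Δ(0,|z_0|). -/

import Mathlib

open Real Complex Filter


lemma abs_one_sub_exp_le (x : ℝ) : ‖1 - Complex.exp (x * I)‖ ≤ |x| := by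
  have h1 : ‖1 - Complex.exp (x * I)‖ = Real.sqrt (2 - 2 * Real.cos x) := by
    rw [Complex.norm_def]
    congr 1
    have hre : ((1 : ℂ) - Complex.exp (x * I)).re = 1 - Real.cos x := by
      simp [Complex.exp_re]
    have him : ((1 : ℂ) - Complex.exp (x * I)).im = - Real.sin x := by
      simp [Complex.exp_im]
    rw [Complex.normSq_apply, hre, him]
    nlinarith [Real.sin_sq_add_cos_sq x]
  rw [h1, ← Real.sqrt_sq_eq_abs]
  apply Real.sqrt_le_sqrt
  have h2 : |Real.sin (x/2)| ≤ |x/2| := Real.abs_sin_le_abs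
  have h3 : Real.sin (x/2) ^ 2 = (1 - Real.cos x)/2 := by
    have h4 := Real.cos_two_mul (x/2)
    have h5 : (2:ℝ) * (x/2) = x := by ring
    rw [h5] at h4
    nlinarith [Real.sin_sq_add_cos_sq (x/2)]
  nlinarith [_root_.sq_abs (Real.sin (x/2)), _root_.sq_abs (x/2), mul_self_le_mul_self (abs_nonneg (Real.sin (x/2))) h2]

lemma circle_exp_zpow (k : ℤ) (x : ℝ) : Circle.exp (k * x) = Circle.exp x ^ k := by
  have h := map_zsmul Circle.expHom k x
  simp only [zsmul_eq_mul] at h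
  have h2 : Circle.expHom (↑k * x) = Additive.ofMul (Circle.exp (k * x)) := rfl
  have h3 : Circle.expHom x = Additive.ofMul (Circle.exp x) := rfl
  rw [h2, h3] at h
  have h4 : k • Additive.ofMul (Circle.exp x) = Additive.ofMul (Circle.exp x ^ k) := rfl
  rw [h4] at h
  exact Additive.ofMul.injective h

lemma denseRange_circle_pow (θ : ℝ)
    (h : ∀ ε > 0, ∃ k m : ℤ, ((k : ℝ) * θ + m) ∈ Set.Ioo (0:ℝ) ε) :
    DenseRange (Circle.exp (2*π*θ) ^ · : ℕ → Circle) := by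
  rw [← denseRange_zpow_iff_pow]
  set S : AddSubgroup ℝ :=
    { carrier := {x | ∃ k m : ℤ, x = k * θ + m}
      zero_mem' := ⟨0, 0, by simp⟩
      add_mem' := by
        rintro a b ⟨k, m, rfl⟩ ⟨k', m', rfl⟩
        exact ⟨k + k', m + m', by push_cast; ring⟩
      neg_mem' := by
        rintro a ⟨k, m, rfl⟩
        exact ⟨-k, -m, by push_cast; ring⟩ } with hSdef
  have hS : Dense (S : Set ℝ) := by
    apply AddSubgroup.dense_of_not_isolated_zero
    intro ε hε
    obtain ⟨k, m, hkm⟩ := h ε hε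
    exact ⟨(k : ℝ) * θ + m, ⟨k, m, rfl⟩, hkm⟩
  have hcont : Continuous (fun x : ℝ => Circle.exp (2*π*x)) :=
    Circle.exp.continuous.comp (continuous_const.mul continuous_id)
  have himg : (fun x : ℝ => Circle.exp (2*π*x)) '' (S : Set ℝ) ⊆
      Set.range (Circle.exp (2*π*θ) ^ · : ℤ → Circle) := by
    rintro - ⟨x, ⟨k, m, rfl⟩, rfl⟩
    refine ⟨k, ?_⟩
    show Circle.exp (2*π*θ) ^ k = Circle.exp (2*π*((k:ℝ)*θ + m))
    have harg : 2*π*((k:ℝ)*θ + m) = (k:ℝ)*(2*π*θ) + (m:ℝ)*(2*π) := by ring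
    rw [harg, Circle.exp_add, circle_exp_zpow, circle_exp_zpow, Circle.exp_two_pi, one_zpow,
      mul_one]
  intro w
  obtain ⟨x, rfl⟩ : ∃ x : ℝ, Circle.exp (2*π*x) = w := by
    refine ⟨Complex.arg w / (2*π), ?_⟩
    have hπ : (2*π : ℝ) ≠ 0 := by positivity
    have : 2*π*(Complex.arg w / (2*π)) = Complex.arg w := by field_simp
    rw [this, Circle.exp_arg]
  have hx : x ∈ closure (S : Set ℝ) := by rw [hS.closure_eq]; trivial
  have := image_closure_subset_closure_image (s := (S : Set ℝ)) hcont (Set.mem_image_of_mem _ hx)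
  exact closure_mono himg this

lemma mem_closure_orbit (θ : ℝ)
    (h : ∀ ε > 0, ∃ k m : ℤ, ((k : ℝ) * θ + m) ∈ Set.Ioo (0:ℝ) ε)
    (z₀ z : ℂ) (hz : ‖z‖ = ‖z₀‖) (h0 : z₀ ≠ 0) :
    z ∈ closure (Set.range fun k : ℕ =>
      Complex.exp (2 * (π:ℂ) * Complex.I * (k:ℂ) * (θ:ℂ)) * z₀) := by
  have habs : ‖z / z₀‖ = 1 := by
    rw [norm_div, hz]
    exact div_self (by simpa using h0)
  have hmem : z / z₀ ∈ Submonoid.unitSphere ℂ := by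
    simp only [Submonoid.unitSphere, Submonoid.mem_mk, Subsemigroup.mem_mk,
      Metric.mem_sphere, dist_zero_right]
    exact habs
  set w : Circle := ⟨z / z₀, hmem⟩ with hw
  have hdense := denseRange_circle_pow θ h
  have hwc : w ∈ closure (Set.range (Circle.exp (2*π*θ) ^ · : ℕ → Circle)) := hdense w
  have hgc : Continuous (fun v : Circle => (v : ℂ) * z₀) :=
    continuous_subtype_val.mul continuous_const
  have himg : (fun v : Circle => (v : ℂ) * z₀) ''
      Set.range (Circle.exp (2*π*θ) ^ · : ℕ → Circle) ⊆
      Set.range fun k : ℕ => Complex.exp (2 * (π:ℂ) * Complex.I * (k:ℂ) * (θ:ℂ)) * z₀ := by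
    rintro - ⟨-, ⟨k, rfl⟩, rfl⟩
    refine ⟨k, ?_⟩
    show Complex.exp (2 * (π:ℂ) * Complex.I * (k:ℂ) * (θ:ℂ)) * z₀ = ((Circle.exp (2*π*θ) ^ k : Circle) : ℂ) * z₀
    have h1 : ((Circle.exp (2*π*θ) ^ k : Circle) : ℂ) = Complex.exp (((2*π*θ : ℝ):ℂ) * Complex.I) ^ k := by
      rw [← Circle.coe_exp]
      exact Circle.coe_pow _ k
    rw [h1, ← Complex.exp_nat_mul]
    congr 2
    push_cast
    ring
  have := image_closure_subset_closure_image hgc (Set.mem_image_of_mem _ hwc)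
  have h2 := closure_mono himg this
  have h3 : (w : ℂ) * z₀ = z := by
    rw [hw]
    exact div_mul_cancel₀ z h0
  rwa [h3] at h2
lemma summable_aux (θ : ℝ)
    (p : ℕ → ℤ) (q : ℕ → ℕ) (hq : ∀ n, 0 < q n)
    (happrox : ∀ n, |θ - (p n : ℝ) / (q n : ℝ)| ≤ 1 / ((q n : ℝ) * (q (n + 1) : ℝ)))
    (hgrowth : Tendsto (fun n => Real.log (q (n + 1)) / (q n : ℝ)) atTop atTop)
    (s : ℕ → ℕ) (hs : StrictMono s)
    (u : ℕ → ℂ) (C : ℝ) (hC : ∀ n, ‖u n‖ ≤ C)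
    (N : ℕ) (R : ℝ) (hR : 0 ≤ R) :
    Summable (fun n : ℕ => ‖u (q (s n)) *
      (1 - Complex.exp (2 * (π:ℂ) * Complex.I * ((q (s n)) : ℂ) * (N : ℂ) * (θ : ℂ)))‖
      * R ^ (q (s n))) := by
  have hC0 : 0 ≤ C := le_trans (norm_nonneg _) (hC 0)
  set K : ℝ := Real.log (max R 1) + 1 with hK
  have hmax : (0:ℝ) < max R 1 := lt_of_lt_of_le one_pos (le_max_right _ _)
  have hK1 : 1 ≤ K := by
    have := Real.log_nonneg (le_max_right R 1)
    linarith
  obtain ⟨n₀, h₀⟩ := (hgrowth.eventually_ge_atTop K).exists_forall_of_atTop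
  -- basic: exp (K * q m) ≤ q (m+1) for m ≥ n₀
  have hq2 : ∀ m, n₀ ≤ m → Real.exp (K * q m) ≤ (q (m+1) : ℝ) := by
    intro m hm
    have h1 : K ≤ Real.log (q (m+1)) / (q m : ℝ) := h₀ m hm
    have hqm : (0:ℝ) < q m := by exact_mod_cast hq m
    have h2 : K * q m ≤ Real.log (q (m+1)) := by
      rw [div_eq_mul_inv] at h1
      calc K * q m ≤ (Real.log (q (m+1)) * (q m : ℝ)⁻¹) * q m := by
            apply mul_le_mul_of_nonneg_right h1 hqm.le
        _ = Real.log (q (m+1)) := by field_simp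
    calc Real.exp (K * q m) ≤ Real.exp (Real.log (q (m+1))) := Real.exp_le_exp.2 h2
      _ = (q (m+1) : ℝ) := Real.exp_log (by exact_mod_cast hq (m+1))
  -- q grows at least linearly past n₀
  have hmono : ∀ m, n₀ ≤ m → q m + 1 ≤ q (m + 1) := by
    intro m hm
    have h1 : ((q m : ℝ)) + 1 ≤ Real.exp (K * q m) := by
      have hqm : (1:ℝ) ≤ q m := by exact_mod_cast hq m
      have : (q m : ℝ) ≤ K * q m := by nlinarith
      calc (q m : ℝ) + 1 ≤ Real.exp (q m) := Real.add_one_le_exp _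
        _ ≤ Real.exp (K * q m) := Real.exp_le_exp.2 this
    have := h1.trans (hq2 m hm)
    exact_mod_cast this
  have hlin : ∀ n, n₀ ≤ n → (n - n₀ : ℕ) ≤ q n := by
    intro n hn
    obtain ⟨d, rfl⟩ := Nat.exists_eq_add_of_le hn
    induction d with
    | zero => simp
    | succ d ih =>
      have h1 := hmono (n₀ + d) (Nat.le_add_right _ _)
      have h2 := ih (Nat.le_add_right _ _)
      have h3 : n₀ + (d + 1) = n₀ + d + 1 := rfl
      rw [h3]
      omega
  -- comparison series
  apply Summable.of_norm_bounded_eventually_nat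
    (g := fun n => (C * (2*π*N) * Real.exp 1 ^ n₀) * Real.exp (-1) ^ n)
  · apply Summable.mul_left
    apply summable_geometric_of_lt_one (Real.exp_pos _).le
    rw [Real.exp_lt_one_iff]
    norm_num
  · filter_upwards [eventually_ge_atTop n₀] with n hn
    set m := s n with hm
    have hmn : n₀ ≤ m := hn.trans (hs.le_apply)
    have hqm : (0:ℝ) < q m := by exact_mod_cast hq m
    have hqm1 : (0:ℝ) < q (m+1) := by exact_mod_cast hq (m+1)
    -- bound |1 - exp(...)|
    have b1 : ‖1 - Complex.exp (2 * (π:ℂ) * Complex.I * ((q m) : ℂ) * (N : ℂ) * (θ : ℂ))‖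
        ≤ 2*π*N * (1 / (q (m+1) : ℝ)) := by
      have hsplit : 2 * (π:ℂ) * Complex.I * ((q m) : ℂ) * (N : ℂ) * (θ : ℂ)
          = ((2*π*((q m : ℝ) * N * θ - N * (p m)) : ℝ):ℂ) * Complex.I
            + ((N * p m : ℤ) : ℂ) * (2 * (π:ℂ) * Complex.I) := by
        push_cast; ring
      set x : ℝ := 2*π*((q m : ℝ) * N * θ - N * (p m)) with hx
      have hexp : Complex.exp (2 * (π:ℂ) * Complex.I * ((q m) : ℂ) * (N : ℂ) * (θ : ℂ))
          = Complex.exp ((x:ℂ) * Complex.I) := by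
        rw [hsplit, Complex.exp_add, Complex.exp_int_mul_two_pi_mul_I, mul_one]
      rw [hexp]
      refine (abs_one_sub_exp_le x).trans ?_
      have hxval : x = (2*π*N*(q m)) * (θ - (p m : ℝ) / (q m : ℝ)) := by
        rw [hx]; field_simp
      rw [hxval, abs_mul]
      have h2 : |(2*π*N*(q m : ℝ))| = 2*π*N*(q m) := by
        rw [_root_.abs_of_nonneg]; positivity
      rw [h2]
      calc 2*π*N*(q m : ℝ) * |θ - (p m : ℝ) / (q m : ℝ)|
          ≤ 2*π*N*(q m : ℝ) * (1 / ((q m : ℝ) * (q (m+1) : ℝ))) := by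
            apply mul_le_mul_of_nonneg_left (happrox m) (by positivity)
        _ = 2*π*N * (1 / (q (m+1) : ℝ)) := by field_simp
    have b2 : (1 : ℝ) / (q (m+1) : ℝ) ≤ Real.exp (-(K * q m)) := by
      rw [Real.exp_neg, one_div]
      exact inv_anti₀ (Real.exp_pos _) (hq2 m hmn)
    have hexpK : Real.exp K = (max R 1) * Real.exp 1 := by
      rw [hK, Real.exp_add, Real.exp_log hmax]
    have hbase : Real.exp (-K) * R ≤ Real.exp (-1) := by
      rw [Real.exp_neg, Real.exp_neg, hexpK, mul_inv]
      have h5 : R * (max R 1)⁻¹ ≤ 1 :=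
        (div_eq_mul_inv R _ ▸ div_le_one_of_le₀ (le_max_left R 1) hmax.le)
      have h6 : (0:ℝ) < (Real.exp 1)⁻¹ := by positivity
      have h7 : (0:ℝ) < (max R 1)⁻¹ := by positivity
      nlinarith
    have hbase0 : 0 ≤ Real.exp (-K) * R := by positivity
    have he1 : Real.exp (-1:ℝ) ≤ 1 := by
      rw [← Real.exp_zero]; exact Real.exp_le_exp.2 (by norm_num)
    have hpow : Real.exp (-(K * (q m : ℝ))) = Real.exp (-K) ^ (q m) := by
      rw [← Real.exp_nat_mul]; congr 1; ring
    have h6 : Real.exp (-1:ℝ) ^ (n - n₀) = Real.exp (-1:ℝ) ^ n * Real.exp 1 ^ n₀ := by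
      have h7 : Real.exp (-1:ℝ) ^ n = Real.exp (-1:ℝ) ^ (n - n₀) * Real.exp (-1:ℝ) ^ n₀ := by
        rw [← pow_add, Nat.sub_add_cancel hn]
      rw [h7, mul_assoc, ← mul_pow, ← Real.exp_add]
      simp
    have hnorm : ‖‖u (q m) *
        (1 - Complex.exp (2 * (π:ℂ) * Complex.I * ((q m) : ℂ) * (N : ℂ) * (θ : ℂ)))‖
        * R ^ (q m)‖ = ‖u (q m)‖ * ‖1 - Complex.exp (2 * (π:ℂ) * Complex.I * ((q m) : ℂ) * (N : ℂ) * (θ : ℂ))‖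
        * R ^ (q m) := by
      rw [Real.norm_eq_abs, _root_.abs_of_nonneg (by positivity), norm_mul]
    rw [hnorm]
    calc _ ≤ C * (2*π*N * (1 / (q (m+1) : ℝ))) * R ^ (q m) := by
          apply mul_le_mul_of_nonneg_right _ (by positivity)
          exact mul_le_mul (hC _) b1 (norm_nonneg _) hC0
      _ ≤ C * (2*π*N * Real.exp (-(K * q m))) * R ^ (q m) := by
          apply mul_le_mul_of_nonneg_right _ (by positivity)
          apply mul_le_mul_of_nonneg_left _ hC0
          apply mul_le_mul_of_nonneg_left b2 (by positivity)
      _ = (C * (2*π*N)) * ((Real.exp (-K) * R) ^ (q m)) := by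
          rw [hpow, mul_pow]; ring
      _ ≤ (C * (2*π*N)) * (Real.exp (-1:ℝ)) ^ (q m) := by
          apply mul_le_mul_of_nonneg_left _ (by positivity)
          exact pow_le_pow_left₀ hbase0 hbase _
      _ ≤ (C * (2*π*N)) * (Real.exp (-1:ℝ)) ^ (n - n₀) := by
          apply mul_le_mul_of_nonneg_left _ (by positivity)
          apply pow_le_pow_of_le_one (Real.exp_pos _).le he1
          exact le_trans (Nat.sub_le_sub_right hs.le_apply n₀) (hlin m hmn)
      _ = (C * (2*π*N) * Real.exp 1 ^ n₀) * Real.exp (-1:ℝ) ^ n := by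
          rw [h6]; ring

/-- Let `θ` be irrational with convergent denominators satisfying
`(log q (n+1))/q n → ∞`, let `q ∘ s` be a subsequence, and `u` a bounded complex
sequence.  Consider the entire maps
`φ_N(z) = z e^{2πiNθ} Σ_n u_{q'_n} (1 - e^{2πi q'_n N θ}) z^{q'_n}` and the
automorphism `A(w,z) = (e^{2πiθ} w + φ_1(z), e^{2πiθ} z)`.  If the orbit of some
`(w₀,z₀)` under `A` is bounded by `M`, then the family `(φ_N)` is uniformly
bounded by `2M` on the circle `|z| = |z₀|` and hence on the disc `|z| ≤ |z₀|`. -/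
theorem phi_bounded_of_bounded_orbit
    (θ : ℝ) (hθ : Irrational θ)
    (p : ℕ → ℤ) (q : ℕ → ℕ) (hq : ∀ n, 0 < q n)
    (happrox : ∀ n, |θ - (p n : ℝ) / (q n : ℝ)| ≤ 1 / ((q n : ℝ) * (q (n + 1) : ℝ)))
    (hgrowth : Tendsto (fun n => Real.log (q (n + 1)) / (q n : ℝ)) atTop atTop)
    (s : ℕ → ℕ) (hs : StrictMono s)
    (u : ℕ → ℂ) (hu : ∃ C, ∀ n, ‖u n‖ ≤ C)
    (φ : ℕ → ℂ → ℂ)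
    (hφ : ∀ N : ℕ, ∀ z : ℂ, φ N z =
      z * Complex.exp (2 * Real.pi * Complex.I * (N : ℂ) * (θ : ℂ)) *
        ∑' n : ℕ, u (q (s n))
          * (1 - Complex.exp (2 * Real.pi * Complex.I * (q (s n) : ℂ) * (N : ℂ) * (θ : ℂ)))
          * z ^ (q (s n)))
    (A : ℂ × ℂ → ℂ × ℂ)
    (hA : ∀ w z : ℂ, A (w, z) =
      (Complex.exp (2 * Real.pi * Complex.I * (θ : ℂ)) * w + φ 1 z,
       Complex.exp (2 * Real.pi * Complex.I * (θ : ℂ)) * z))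
    (w₀ z₀ : ℂ) (M : ℝ)
    (horbit : ∀ N : ℕ, ‖A^[N] (w₀, z₀)‖ ≤ M) :
    (∀ N : ℕ, ∀ z : ℂ, ‖z‖ = ‖z₀‖ → ‖φ N z‖ ≤ 2 * M) ∧
    (∀ N : ℕ, ∀ z : ℂ, ‖z‖ ≤ ‖z₀‖ → ‖φ N z‖ ≤ 2 * M) := by
  obtain ⟨C, hC⟩ := hu
  -- summability of the coefficient series
  have hsum0 : ∀ (N : ℕ) (R : ℝ), 0 ≤ R → Summable (fun n : ℕ => ‖u (q (s n)) *
      (1 - Complex.exp (2 * (π:ℂ) * Complex.I * ((q (s n)) : ℂ) * (N : ℂ) * (θ : ℂ)))‖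
      * R ^ (q (s n))) :=
    fun N R hR => summable_aux θ p q hq happrox hgrowth s hs u C hC N R hR
  have hsummand : ∀ (N : ℕ) (z : ℂ), Summable (fun n : ℕ => u (q (s n)) *
      (1 - Complex.exp (2 * (π:ℂ) * Complex.I * ((q (s n)) : ℂ) * (N : ℂ) * (θ : ℂ)))
      * z ^ (q (s n))) := by
    intro N z
    apply Summable.of_norm
    have hfun : (fun n : ℕ => ‖u (q (s n)) *
        (1 - Complex.exp (2 * (π:ℂ) * Complex.I * ((q (s n)) : ℂ) * (N : ℂ) * (θ : ℂ)))
        * z ^ (q (s n))‖) = fun n : ℕ => ‖u (q (s n)) *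
        (1 - Complex.exp (2 * (π:ℂ) * Complex.I * ((q (s n)) : ℂ) * (N : ℂ) * (θ : ℂ)))‖
        * (‖z‖) ^ (q (s n)) := by
      funext n
      rw [norm_mul, norm_pow]
    rw [hfun]
    exact hsum0 N (‖z‖) (norm_nonneg z)
  -- the cocycle identity
  have hcoc : ∀ (N : ℕ) (z : ℂ), φ (N + 1) z =
      Complex.exp (2 * (π:ℂ) * Complex.I * (θ:ℂ)) * φ N z +
        φ 1 (Complex.exp (2 * (π:ℂ) * Complex.I * (N:ℂ) * (θ:ℂ)) * z) := by
    intro N z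
    have hE : Complex.exp (2 * (π:ℂ) * Complex.I * (θ:ℂ)) *
        Complex.exp (2 * (π:ℂ) * Complex.I * (N:ℂ) * (θ:ℂ)) =
        Complex.exp (2 * (π:ℂ) * Complex.I * (((N+1 : ℕ)):ℂ) * (θ:ℂ)) := by
      rw [← Complex.exp_add]; congr 1; push_cast; ring
    have hterm : ∀ n : ℕ, u (q (s n))
        * (1 - Complex.exp (2 * (π:ℂ) * Complex.I * ((q (s n)) : ℂ) * (((1:ℕ)) : ℂ) * (θ : ℂ)))
        * (Complex.exp (2 * (π:ℂ) * Complex.I * (N:ℂ) * (θ:ℂ)) * z) ^ (q (s n))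
        = u (q (s n))
        * ((1 - Complex.exp (2 * (π:ℂ) * Complex.I * ((q (s n)) : ℂ) * (θ : ℂ)))
            * Complex.exp (2 * (π:ℂ) * Complex.I * ((q (s n)) : ℂ) * (N : ℂ) * (θ : ℂ)))
        * z ^ (q (s n)) := by
      intro n
      rw [mul_pow]
      have h1 : Complex.exp (2 * (π:ℂ) * Complex.I * (N:ℂ) * (θ:ℂ)) ^ (q (s n))
          = Complex.exp (2 * (π:ℂ) * Complex.I * ((q (s n)) : ℂ) * (N : ℂ) * (θ : ℂ)) := by
        rw [← Complex.exp_nat_mul]; congr 1; push_cast; ring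
      rw [h1]
      push_cast
      ring
    have hadd : ∀ n : ℕ, u (q (s n))
        * (1 - Complex.exp (2 * (π:ℂ) * Complex.I * ((q (s n)) : ℂ) * (N : ℂ) * (θ : ℂ)))
        * z ^ (q (s n))
        + u (q (s n))
        * ((1 - Complex.exp (2 * (π:ℂ) * Complex.I * ((q (s n)) : ℂ) * (θ : ℂ)))
            * Complex.exp (2 * (π:ℂ) * Complex.I * ((q (s n)) : ℂ) * (N : ℂ) * (θ : ℂ)))
        * z ^ (q (s n))
        = u (q (s n))
        * (1 - Complex.exp (2 * (π:ℂ) * Complex.I * ((q (s n)) : ℂ) * (((N+1:ℕ)) : ℂ) * (θ : ℂ)))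
        * z ^ (q (s n)) := by
      intro n
      have h2 : Complex.exp (2 * (π:ℂ) * Complex.I * ((q (s n)) : ℂ) * (θ : ℂ)) *
          Complex.exp (2 * (π:ℂ) * Complex.I * ((q (s n)) : ℂ) * (N : ℂ) * (θ : ℂ)) =
          Complex.exp (2 * (π:ℂ) * Complex.I * ((q (s n)) : ℂ) * (((N+1:ℕ)) : ℂ) * (θ : ℂ)) := by
        rw [← Complex.exp_add]; congr 1; push_cast; ring
      rw [← h2]
      ring
    have hsum2 : Summable (fun n : ℕ => u (q (s n))
        * ((1 - Complex.exp (2 * (π:ℂ) * Complex.I * ((q (s n)) : ℂ) * (θ : ℂ)))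
            * Complex.exp (2 * (π:ℂ) * Complex.I * ((q (s n)) : ℂ) * (N : ℂ) * (θ : ℂ)))
        * z ^ (q (s n))) := by
      apply Summable.congr (hsummand 1 (Complex.exp (2 * (π:ℂ) * Complex.I * (N:ℂ) * (θ:ℂ)) * z))
      intro n
      exact hterm n
    rw [hφ, hφ, hφ]
    have h3 : (∑' n : ℕ, u (q (s n))
        * (1 - Complex.exp (2 * (π:ℂ) * Complex.I * ((q (s n)) : ℂ) * (((1:ℕ)) : ℂ) * (θ : ℂ)))
        * (Complex.exp (2 * (π:ℂ) * Complex.I * (N:ℂ) * (θ:ℂ)) * z) ^ (q (s n)))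
        = ∑' n : ℕ, u (q (s n))
        * ((1 - Complex.exp (2 * (π:ℂ) * Complex.I * ((q (s n)) : ℂ) * (θ : ℂ)))
            * Complex.exp (2 * (π:ℂ) * Complex.I * ((q (s n)) : ℂ) * (N : ℂ) * (θ : ℂ)))
        * z ^ (q (s n)) := tsum_congr hterm
    have h4 : (∑' n : ℕ, u (q (s n))
        * (1 - Complex.exp (2 * (π:ℂ) * Complex.I * ((q (s n)) : ℂ) * (((N+1:ℕ)) : ℂ) * (θ : ℂ)))
        * z ^ (q (s n)))
        = (∑' n : ℕ, u (q (s n))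
        * (1 - Complex.exp (2 * (π:ℂ) * Complex.I * ((q (s n)) : ℂ) * (N : ℂ) * (θ : ℂ)))
        * z ^ (q (s n)))
        + ∑' n : ℕ, u (q (s n))
        * ((1 - Complex.exp (2 * (π:ℂ) * Complex.I * ((q (s n)) : ℂ) * (θ : ℂ)))
            * Complex.exp (2 * (π:ℂ) * Complex.I * ((q (s n)) : ℂ) * (N : ℂ) * (θ : ℂ)))
        * z ^ (q (s n)) := by
      rw [← Summable.tsum_add (hsummand N z) hsum2]
      exact tsum_congr fun n => (hadd n).symm
    rw [h3, h4]
    have h5 : Complex.exp (2 * (π:ℂ) * Complex.I * (((1:ℕ)):ℂ) * (θ:ℂ))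
        = Complex.exp (2 * (π:ℂ) * Complex.I * (θ:ℂ)) := by
      norm_num
    rw [h5, ← hE]
    ring
  -- the orbit formula
  have hiter : ∀ (N : ℕ) (w z : ℂ), A^[N] (w, z) =
      (Complex.exp (2 * (π:ℂ) * Complex.I * (N:ℂ) * (θ:ℂ)) * w + φ N z,
       Complex.exp (2 * (π:ℂ) * Complex.I * (N:ℂ) * (θ:ℂ)) * z) := by
    intro N
    induction N with
    | zero =>
      intro w z
      have hφ0 : φ 0 z = 0 := by
        rw [hφ]
        simp
      rw [Function.iterate_zero_apply, hφ0]
      norm_num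
    | succ N ih =>
      intro w z
      have hE : Complex.exp (2 * (π:ℂ) * Complex.I * (θ:ℂ)) *
          Complex.exp (2 * (π:ℂ) * Complex.I * (N:ℂ) * (θ:ℂ)) =
          Complex.exp (2 * (π:ℂ) * Complex.I * (((N+1 : ℕ)):ℂ) * (θ:ℂ)) := by
        rw [← Complex.exp_add]; congr 1; push_cast; ring
      rw [Function.iterate_succ_apply', ih, hA]
      rw [Prod.mk.injEq]
      refine ⟨?_, ?_⟩
      · show Complex.exp (2 * (π:ℂ) * Complex.I * (θ:ℂ)) *
            (Complex.exp (2 * (π:ℂ) * Complex.I * (N:ℂ) * (θ:ℂ)) * w + φ N z)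
            + φ 1 (Complex.exp (2 * (π:ℂ) * Complex.I * (N:ℂ) * (θ:ℂ)) * z)
            = Complex.exp (2 * (π:ℂ) * Complex.I * (((N+1:ℕ)):ℂ) * (θ:ℂ)) * w + φ (N+1) z
        rw [hcoc N z, ← hE]
        ring
      · show Complex.exp (2 * (π:ℂ) * Complex.I * (θ:ℂ)) *
            (Complex.exp (2 * (π:ℂ) * Complex.I * (N:ℂ) * (θ:ℂ)) * z)
            = Complex.exp (2 * (π:ℂ) * Complex.I * (((N+1:ℕ)):ℂ) * (θ:ℂ)) * z
        rw [← hE]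
        ring
  -- norms of exponentials
  have habsE : ∀ N : ℕ, ‖Complex.exp (2 * (π:ℂ) * Complex.I * (N:ℂ) * (θ:ℂ))‖ = 1 := by
    intro N
    have h1 : 2 * (π:ℂ) * Complex.I * (N:ℂ) * (θ:ℂ) = ((2*π*N*θ : ℝ) : ℂ) * Complex.I := by
      push_cast; ring
    rw [h1, Complex.norm_exp_ofReal_mul_I]
  have hM0 : 0 ≤ M := le_trans (norm_nonneg _) (horbit 0)
  have hw0 : ∀ k : ℕ, ‖(A^[k] (w₀, z₀)).1‖ ≤ M := fun k => by
    exact le_trans (norm_fst_le _) (horbit k)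
  -- bound along the orbit of the circle
  have hbd : ∀ (N k : ℕ),
      ‖φ N (Complex.exp (2 * (π:ℂ) * Complex.I * (k:ℂ) * (θ:ℂ)) * z₀)‖ ≤ 2 * M := by
    intro N k
    have h1 := hiter k w₀ z₀
    have h2 : A^[N + k] (w₀, z₀) = A^[N] (A^[k] (w₀, z₀)) := Function.iterate_add_apply A N k _
    rw [h1, hiter N] at h2
    have h3 : ‖Complex.exp (2 * (π:ℂ) * Complex.I * (N:ℂ) * (θ:ℂ)) *
        (Complex.exp (2 * (π:ℂ) * Complex.I * (k:ℂ) * (θ:ℂ)) * w₀ + φ k z₀) +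
        φ N (Complex.exp (2 * (π:ℂ) * Complex.I * (k:ℂ) * (θ:ℂ)) * z₀)‖ ≤ M := by
      have h4 := hw0 (N + k)
      rw [h2] at h4
      exact h4
    have h5 : ‖Complex.exp (2 * (π:ℂ) * Complex.I * (k:ℂ) * (θ:ℂ)) * w₀ + φ k z₀‖
        ≤ M := by
      have h6 := hw0 k
      rw [h1] at h6
      exact h6
    have h7 : φ N (Complex.exp (2 * (π:ℂ) * Complex.I * (k:ℂ) * (θ:ℂ)) * z₀) =
        (Complex.exp (2 * (π:ℂ) * Complex.I * (N:ℂ) * (θ:ℂ)) *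
          (Complex.exp (2 * (π:ℂ) * Complex.I * (k:ℂ) * (θ:ℂ)) * w₀ + φ k z₀) +
          φ N (Complex.exp (2 * (π:ℂ) * Complex.I * (k:ℂ) * (θ:ℂ)) * z₀)) -
        Complex.exp (2 * (π:ℂ) * Complex.I * (N:ℂ) * (θ:ℂ)) *
          (Complex.exp (2 * (π:ℂ) * Complex.I * (k:ℂ) * (θ:ℂ)) * w₀ + φ k z₀) := by
      ring
    rw [h7]
    have h8 := norm_sub_le
      (Complex.exp (2 * (π:ℂ) * Complex.I * (N:ℂ) * (θ:ℂ)) *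
          (Complex.exp (2 * (π:ℂ) * Complex.I * (k:ℂ) * (θ:ℂ)) * w₀ + φ k z₀) +
          φ N (Complex.exp (2 * (π:ℂ) * Complex.I * (k:ℂ) * (θ:ℂ)) * z₀))
      (Complex.exp (2 * (π:ℂ) * Complex.I * (N:ℂ) * (θ:ℂ)) *
          (Complex.exp (2 * (π:ℂ) * Complex.I * (k:ℂ) * (θ:ℂ)) * w₀ + φ k z₀))
    refine le_trans h8 ?_
    have h9 : ‖Complex.exp (2 * (π:ℂ) * Complex.I * (N:ℂ) * (θ:ℂ)) *
        (Complex.exp (2 * (π:ℂ) * Complex.I * (k:ℂ) * (θ:ℂ)) * w₀ + φ k z₀)‖ ≤ M := by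
      rw [norm_mul, habsE N, one_mul]
      exact h5
    linarith
  -- density witness from the approximations
  have hIoo : ∀ ε > 0, ∃ k m : ℤ, ((k:ℝ) * θ + m) ∈ Set.Ioo (0:ℝ) ε := by
    intro ε hε
    obtain ⟨n, hn⟩ := (hgrowth.eventually_ge_atTop (max 1 (Real.log (1/ε) + 1))).exists
    have hqn : (1:ℝ) ≤ q n := by exact_mod_cast hq n
    have hqn0 : (0:ℝ) < q n := by linarith
    have hqn1 : (0:ℝ) < q (n+1) := by exact_mod_cast hq (n+1)
    have hD1 : (1:ℝ) ≤ Real.log (q (n+1)) / q n := le_trans (le_max_left _ _) hn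
    have hD2 : Real.log (1/ε) + 1 ≤ Real.log (q (n+1)) / q n := le_trans (le_max_right _ _) hn
    have hlog : Real.log (1/ε) + 1 ≤ Real.log (q (n+1)) := by
      have h8 : Real.log (q (n+1)) = (Real.log (q (n+1)) / q n) * q n := by field_simp
      nlinarith
    have h2 : (1:ℝ)/ε < q (n+1) := by
      have h9 : Real.exp (Real.log (1/ε) + 1) ≤ q (n+1) := by
        rw [← Real.exp_log hqn1]
        exact Real.exp_le_exp.2 hlog
      have h10 : Real.exp (Real.log (1/ε) + 1) = (1/ε) * Real.exp 1 := by
        rw [Real.exp_add, Real.exp_log (by positivity)]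
      have h11 : (2:ℝ) ≤ Real.exp 1 := by
        have := Real.add_one_le_exp (1:ℝ)
        linarith
      nlinarith [one_div_pos.mpr hε]
    have hlt : 1 / (q (n+1) : ℝ) < ε := by
      rw [div_lt_iff₀ hqn1]
      rw [div_lt_iff₀ hε] at h2
      linarith
    set a : ℝ := (q n : ℝ) * θ - p n with hadef
    have haval : a = (q n : ℝ) * (θ - (p n : ℝ) / (q n : ℝ)) := by
      rw [hadef]; field_simp
    have hbound : |a| ≤ 1 / (q (n+1) : ℝ) := by
      rw [haval, abs_mul, _root_.abs_of_nonneg hqn0.le]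
      calc (q n : ℝ) * |θ - (p n : ℝ) / (q n : ℝ)|
          ≤ (q n : ℝ) * (1 / ((q n : ℝ) * (q (n+1) : ℝ))) :=
            mul_le_mul_of_nonneg_left (happrox n) hqn0.le
        _ = 1 / (q (n+1) : ℝ) := by field_simp
    have ha0 : a ≠ 0 := by
      intro h
      apply hθ
      refine ⟨(p n : ℚ) / (q n : ℚ), ?_⟩
      have hq0 : (q n : ℝ) ≠ 0 := hqn0.ne'
      push_cast
      rw [div_eq_iff hq0]
      rw [hadef, sub_eq_zero] at h
      linarith [h]
    have habs : |a| ∈ Set.Ioo (0:ℝ) ε :=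
      ⟨abs_pos.mpr ha0, lt_of_le_of_lt hbound hlt⟩
    rcases lt_or_gt_of_ne ha0 with hneg | hpos
    · refine ⟨-(q n : ℤ), p n, ?_⟩
      have : ((-(q n : ℤ) : ℤ) : ℝ) * θ + ((p n : ℤ) : ℝ) = -a := by
        rw [hadef]; push_cast; ring
      rw [this]
      rwa [abs_of_neg hneg] at habs
    · refine ⟨(q n : ℤ), -(p n), ?_⟩
      have : (((q n : ℤ) : ℤ) : ℝ) * θ + ((-(p n) : ℤ) : ℝ) = a := by
        rw [hadef]; push_cast; ring
      rw [this]
      rwa [abs_of_pos hpos] at habs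
  -- differentiability of φ N
  have hdiff : ∀ (N : ℕ) (R : ℝ), 0 < R → DifferentiableOn ℂ (φ N) (Metric.ball 0 R) := by
    intro N R hR
    have heq : φ N = fun z => z * Complex.exp (2 * (π:ℂ) * Complex.I * (N:ℂ) * (θ:ℂ)) *
        ∑' n : ℕ, u (q (s n))
          * (1 - Complex.exp (2 * (π:ℂ) * Complex.I * ((q (s n)) : ℂ) * (N : ℂ) * (θ : ℂ)))
          * z ^ (q (s n)) := funext fun z => hφ N z
    rw [heq]
    apply DifferentiableOn.mul
    · exact (differentiable_id.mul_const _).differentiableOn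
    · apply differentiableOn_tsum_of_summable_norm (hsum0 N R hR.le)
      · intro i
        exact ((differentiable_const _).mul (differentiable_pow _)).differentiableOn
      · exact Metric.isOpen_ball
      · intro i w hw
        rw [norm_mul, norm_pow]
        apply mul_le_mul_of_nonneg_left _ (norm_nonneg _)
        apply pow_le_pow_left₀ (norm_nonneg w)
        have : ‖w‖ < R := by
          simpa [Complex.dist_eq] using hw
        exact this.le
  have hcontAt : ∀ (N : ℕ) (z : ℂ), ContinuousAt (φ N) z := by
    intro N z
    have h1 := hdiff N (‖z‖ + 1) (by positivity)
    have hz : z ∈ Metric.ball (0:ℂ) (‖z‖ + 1) := by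
      simp only [Metric.mem_ball, Complex.dist_eq, sub_zero]
      linarith
    exact (h1.differentiableAt (Metric.isOpen_ball.mem_nhds hz)).continuousAt
  have hzero : ∀ N : ℕ, φ N 0 = 0 := by
    intro N
    rw [hφ, zero_mul, zero_mul]
  -- part 1 : bound on the circle
  have part1 : ∀ N : ℕ, ∀ z : ℂ, ‖z‖ = ‖z₀‖ → ‖φ N z‖ ≤ 2 * M := by
    intro N z hz
    by_cases h0 : z₀ = 0
    · have hz0 : z = 0 := by
        rw [h0] at hz
        simpa using hz
      rw [hz0, hzero, norm_zero]
      linarith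
    · have hdns := mem_closure_orbit θ hIoo z₀ z hz h0
      have hT : ∀ x ∈ Set.range (fun k : ℕ =>
          Complex.exp (2 * (π:ℂ) * Complex.I * (k:ℂ) * (θ:ℂ)) * z₀),
          ‖φ N x‖ ≤ 2*M := by
        rintro - ⟨k, rfl⟩
        exact hbd N k
      have htend : Tendsto (fun x => ‖φ N x‖)
          (nhdsWithin z (Set.range fun k : ℕ =>
            Complex.exp (2 * (π:ℂ) * Complex.I * (k:ℂ) * (θ:ℂ)) * z₀))
          (nhds (‖φ N z‖)) :=
        (continuous_norm.continuousAt.comp (hcontAt N z)).continuousWithinAt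
      have hne : (nhdsWithin z (Set.range fun k : ℕ =>
          Complex.exp (2 * (π:ℂ) * Complex.I * (k:ℂ) * (θ:ℂ)) * z₀)).NeBot :=
        mem_closure_iff_nhdsWithin_neBot.mp hdns
      exact le_of_tendsto htend (eventually_nhdsWithin_of_forall hT)
  refine ⟨part1, ?_⟩
  -- part 2 : maximum principle
  intro N z hzle
  by_cases h0 : z₀ = 0
  · have hz0 : z = 0 := by
      rw [h0, norm_zero] at hzle
      have := norm_nonneg z
      have : ‖z‖ = 0 := le_antisymm hzle this
      exact norm_eq_zero.mp this
    rw [hz0, hzero, norm_zero]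
    linarith
  · have hr : 0 < ‖z₀‖ := norm_pos_iff.mpr h0
    have hU : Bornology.IsBounded (Metric.ball (0:ℂ) (‖z₀‖)) := Metric.isBounded_ball
    have hsub : closure (Metric.ball (0:ℂ) (‖z₀‖)) ⊆
        Metric.ball 0 (‖z₀‖ + 1) := by
      rw [closure_ball 0 hr.ne']
      exact Metric.closedBall_subset_ball (by linarith)
    have hdc : DiffContOnCl ℂ (φ N) (Metric.ball 0 (‖z₀‖)) :=
      DifferentiableOn.diffContOnCl
        (((hdiff N (‖z₀‖ + 1) (by linarith))).mono hsub)
    have hfr : ∀ x ∈ frontier (Metric.ball (0:ℂ) (‖z₀‖)), ‖φ N x‖ ≤ 2*M := by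
      intro x hx
      rw [frontier_ball 0 hr.ne'] at hx
      have hx2 : ‖x‖ = ‖z₀‖ := by
        simpa [Complex.dist_eq] using hx
      exact part1 N x hx2
    have hcl : z ∈ closure (Metric.ball (0:ℂ) (‖z₀‖)) := by
      rw [closure_ball 0 hr.ne']
      simpa [Complex.dist_eq] using hzle
    have hfin := Complex.norm_le_of_forall_mem_frontier_norm_le hU hdc hfr hcl
    exact hfin
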